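/- A real irrational number x is non-Liouville if and only if there exist a constant C > 0 and a positive integer N such that |e^{2πikx} - 1| ≥ C / k^N for all positive integers k. -/

import Mathlib

open Real Complex

lemma aux_abs_exp (θ : ℝ) :
    ‖Complex.exp ((θ : ℂ) * Complex.I) - 1‖ = 2 * |Real.sin (θ / 2)| := by
  rw [Complex.exp_mul_I]
  have h : (Complex.cos θ + Complex.sin θ * Complex.I - 1)
      = Complex.ofReal (Real.cos θ - 1) + Complex.ofReal (Real.sin θ) * Complex.I := by
    rw [← Complex.ofReal_cos, ← Complex.ofReal_sin]
    push_cast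
    ring
  rw [h, Complex.norm_def, Complex.normSq_add_mul_I]
  have h2 : (Real.cos θ - 1) ^ 2 + Real.sin θ ^ 2 = (2 * |Real.sin (θ / 2)|) ^ 2 := by
    have h3 := Real.sin_sq_add_cos_sq θ
    have h4 : Real.sin (θ / 2) ^ 2 = (1 - Real.cos θ) / 2 := by
      have h6 := Real.abs_sin_half θ
      have h5 : |Real.sin (θ / 2)| ^ 2 = (1 - Real.cos θ) / 2 := by
        rw [h6, sq_sqrt]
        nlinarith [Real.cos_le_one θ]
      rwa [_root_.sq_abs] at h5
    rw [mul_pow, _root_.sq_abs]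
    nlinarith
  rw [h2, Real.sqrt_sq (by positivity)]

lemma aux_sin_shift (t : ℝ) (p : ℤ) : |Real.sin (π * t)| = |Real.sin (π * (t - p))| := by
  have h : π * t = π * (t - p) + p * π := by ring
  rw [h, Real.sin_add_int_mul_pi, abs_mul]
  rcases Int.even_or_odd p with he | ho
  · rw [he.neg_one_zpow]
    norm_num
  · rw [ho.neg_one_zpow]
    norm_num

lemma aux_sin_lower (t : ℝ) : 2 * |t - round t| ≤ |Real.sin (π * t)| := by
  rw [aux_sin_shift t (round t)]
  set s := t - (round t : ℝ) with hs
  have hsb : |s| ≤ 1 / 2 := abs_sub_round t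
  have hpi := Real.pi_pos
  have h1 : |π * s| ≤ π / 2 := by
    rw [abs_mul, abs_of_pos hpi]
    nlinarith
  have h2 := Real.mul_abs_le_abs_sin h1
  rw [abs_mul, abs_of_pos hpi] at h2
  calc 2 * |s| = 2 / π * (π * |s|) := by field_simp
    _ ≤ |Real.sin (π * s)| := h2

lemma aux_sin_upper (t : ℝ) (p : ℤ) : |Real.sin (π * t)| ≤ π * |t - p| := by
  rw [aux_sin_shift t p]
  calc |Real.sin (π * (t - p))| ≤ |π * (t - p)| := Real.abs_sin_le_abs
    _ = π * |t - p| := by rw [abs_mul, abs_of_pos Real.pi_pos]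

lemma aux_main_abs (k : ℕ) (x : ℝ) :
    ‖Complex.exp (2 * Real.pi * Complex.I * (k : ℂ) * (x : ℂ)) - 1‖
      = 2 * |Real.sin (π * (k * x))| := by
  have h : (2 * (Real.pi : ℂ) * Complex.I * (k : ℂ) * (x : ℂ))
      = ((2 * π * (k * x) : ℝ) : ℂ) * Complex.I := by push_cast; ring
  rw [h, aux_abs_exp]
  congr 2
  ring

/-- An irrational real number `x` is non-Liouville iff there are `C > 0` and a positive
integer `N` with `|e^{2πikx} - 1| ≥ C / k^N` for all positive integers `k`. -/
theorem stmt_0 (x : ℝ) (hx : Irrational x) :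
    ¬ Liouville x ↔
      ∃ C : ℝ, 0 < C ∧ ∃ N : ℕ, 0 < N ∧ ∀ k : ℕ, 0 < k →
        C / (k : ℝ) ^ N ≤
          ‖Complex.exp (2 * Real.pi * Complex.I * (k : ℂ) * (x : ℂ)) - 1‖ := by
  constructor
  · intro hL
    rw [Liouville] at hL
    push_neg at hL
    obtain ⟨n, hn⟩ := hL
    refine ⟨4 / 2 ^ n, by positivity, n + 1, Nat.succ_pos n, fun k hk => ?_⟩
    have hk1 : (1 : ℝ) ≤ (k : ℝ) := by exact_mod_cast hk
    have hkpos : (0 : ℝ) < (k : ℝ) := by linarith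
    set p : ℤ := round ((k : ℝ) * x) with hp
    have hne : x ≠ ((2 * p : ℤ) : ℝ) / ((2 * (k : ℤ) : ℤ) : ℝ) :=
      (irrational_iff_ne_rational x).mp hx (2 * p) (2 * (k : ℤ)) (by omega)
    have hb : (1 : ℤ) < 2 * (k : ℤ) := by
      have : (1 : ℤ) ≤ (k : ℤ) := by exact_mod_cast hk
      omega
    have key := hn (2 * p) (2 * k) hb hne
    have harg : x - ((2 * p : ℤ) : ℝ) / ((2 * (k : ℤ) : ℤ) : ℝ)
        = ((k : ℝ) * x - p) / k := by
      push_cast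
      field_simp
    rw [harg, abs_div, abs_of_pos hkpos] at key
    push_cast at key
    -- key : 1 / (2 * k) ^ n ≤ |k x - p| / k
    have hdist : (k : ℝ) / (2 * k) ^ n ≤ |(k : ℝ) * x - p| := by
      have h7 := mul_le_mul_of_nonneg_right key (le_of_lt hkpos)
      rw [div_mul_cancel₀ _ (ne_of_gt hkpos)] at h7
      calc (k : ℝ) / (2 * k) ^ n = 1 / (2 * k) ^ n * k := by ring
        _ ≤ |(k : ℝ) * x - p| := h7
    rw [aux_main_abs]
    have hlow := aux_sin_lower ((k : ℝ) * x)
    rw [← hp] at hlow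
    have hfinal : 4 / 2 ^ n / (k : ℝ) ^ (n + 1) ≤ 4 * ((k : ℝ) / (2 * k) ^ n) := by
      rw [div_div, mul_pow, ← mul_div_assoc,
        div_le_div_iff₀ (by positivity) (by positivity)]
      -- 4 * (2^n * k^n) ≤ 4 * k * (2^n * k^(n+1))
      have hkn : (k : ℝ) ^ n ≤ (k : ℝ) ^ (n + 1) :=
        pow_le_pow_right₀ hk1 (by omega)
      have h2n : (0 : ℝ) < 2 ^ n := by positivity
      have hA : (0 : ℝ) < 2 ^ n * (k : ℝ) ^ (n + 1) := by positivity
      nlinarith [mul_le_mul_of_nonneg_left hkn (by positivity : (0:ℝ) ≤ 4 * 2 ^ n),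
        mul_le_mul_of_nonneg_right hk1 hA.le]
    calc 4 / 2 ^ n / (k : ℝ) ^ (n + 1) ≤ 4 * ((k : ℝ) / (2 * k) ^ n) := hfinal
      _ ≤ 4 * |(k : ℝ) * x - p| := by linarith
      _ = 2 * (2 * |(k : ℝ) * x - p|) := by ring
      _ ≤ 2 * |Real.sin (π * ((k : ℝ) * x))| := by linarith
  · rintro ⟨C, hC, N, hN, hbound⟩ hL
    obtain ⟨j, hj⟩ := pow_unbounded_of_one_lt (2 * π / C) (by norm_num : (1:ℝ) < 2)
    obtain ⟨a, b, hb, hne, hlt⟩ := hL (N + 1 + j)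
    set k : ℕ := b.toNat with hkdef
    have hkb : (k : ℤ) = b := Int.toNat_of_nonneg (by omega)
    have hk2 : 2 ≤ k := by omega
    have hkpos : 0 < k := by omega
    have hkR : (2 : ℝ) ≤ (k : ℝ) := by exact_mod_cast hk2
    have hkRpos : (0 : ℝ) < (k : ℝ) := by linarith
    have hbR : ((b : ℤ) : ℝ) = (k : ℝ) := by exact_mod_cast hkb.symm
    rw [hbR] at hlt
    -- hlt : |x - a / k| < 1 / k ^ (N+1+j)
    have h1 := hbound k hkpos
    rw [aux_main_abs] at h1
    have h2 : |Real.sin (π * ((k : ℝ) * x))| ≤ π * |(k : ℝ) * x - a| :=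
      aux_sin_upper ((k : ℝ) * x) a
    have h3 : |(k : ℝ) * x - a| = (k : ℝ) * |x - (a : ℝ) / (k : ℝ)| := by
      rw [← abs_of_pos hkRpos, ← abs_mul]
      congr 1
      field_simp
      rw [abs_of_pos hkRpos]
      ring
    have h5 : C / (k : ℝ) ^ N < 2 * π * ((k : ℝ) / (k : ℝ) ^ (N + 1 + j)) := by
      calc C / (k : ℝ) ^ N ≤ 2 * |Real.sin (π * ((k : ℝ) * x))| := h1
        _ ≤ 2 * (π * ((k : ℝ) * |x - (a : ℝ) / (k : ℝ)|)) := by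
            rw [← h3]; nlinarith [h2, Real.pi_pos]
        _ < 2 * (π * ((k : ℝ) * (1 / (k : ℝ) ^ (N + 1 + j)))) := by
            have hpi := Real.pi_pos
            apply mul_lt_mul_of_pos_left _ (by norm_num)
            apply mul_lt_mul_of_pos_left _ hpi
            exact mul_lt_mul_of_pos_left hlt hkRpos
        _ = 2 * π * ((k : ℝ) / (k : ℝ) ^ (N + 1 + j)) := by ring
    have heq : 2 * π * ((k : ℝ) / (k : ℝ) ^ (N + 1 + j))
        = 2 * π / ((k : ℝ) ^ N * (k : ℝ) ^ j) := by
      field_simp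
      ring
    rw [heq, div_lt_div_iff₀ (by positivity) (by positivity)] at h5
    -- h5 : C * (k^N * k^j) < 2π * k^N
    have hkN : (0 : ℝ) < (k : ℝ) ^ N := by positivity
    have h5' : C * (k : ℝ) ^ j * (k : ℝ) ^ N < 2 * π * (k : ℝ) ^ N := by
      ring_nf at h5 ⊢
      linarith
    have h7 : C * (k : ℝ) ^ j < 2 * π := lt_of_mul_lt_mul_right h5' hkN.le
    have h8 : (2 : ℝ) ^ j ≤ (k : ℝ) ^ j := pow_le_pow_left₀ (by norm_num) hkR j
    rw [div_lt_iff₀ hC] at hj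
    nlinarith
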